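/- arXiv:2007.10930 — 4 statements merged into one kernel-verified Lean document; each statement's English description precedes it below -/
import Mathlib

section
/- Let A ∈ R^{D×D} be a matrix with |det A| = 1 such that every column of A has ℓα quasi-norm equal to 1 for some fixed α with 0 < α < 2. Then A is a signed permutation matrix, i.e., each column has exactly one nonzero entry, which equals 1 or -1. -/
open Real Finset

/-- Hadamard's inequality for real matrices, columns version. -/
lemma hadamard_abs_det_le (D : ℕ) (A : Matrix (Fin D) (Fin D) ℝ) :
    |A.det| ≤ ∏ j, Real.sqrt (∑ i, A i j ^ 2) := by
  haveI : Fact (Module.finrank ℝ (EuclideanSpace ℝ (Fin D)) = D) :=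
    ⟨finrank_euclideanSpace_fin⟩
  set b := EuclideanSpace.basisFun (Fin D) ℝ with hb
  let o : Orientation ℝ (EuclideanSpace ℝ (Fin D)) (Fin D) := b.toBasis.orientation
  let v : Fin D → EuclideanSpace ℝ (Fin D) :=
    fun j => (WithLp.equiv 2 (Fin D → ℝ)).symm (fun i => A i j)
  have hrepr : ∀ j i, b.toBasis.repr (v j) i = A i j := fun j i => rfl
  have hdetv : b.toBasis.det v = A.det := by
    rw [Module.Basis.det_apply]
    congr 1
  have h1 : |A.det| = |o.volumeForm v| := by
    rw [o.volumeForm_robust' b, hdetv]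
  have h2 : ∀ j, ‖v j‖ = Real.sqrt (∑ i, A i j ^ 2) := by
    intro j
    rw [EuclideanSpace.norm_eq]
    congr 1
    refine Finset.sum_congr rfl fun i _ => ?_
    rw [Real.norm_eq_abs, sq_abs]
    rfl
  calc |A.det| = |o.volumeForm v| := h1
    _ ≤ ∏ j, ‖v j‖ := o.abs_volumeForm_apply_le v
    _ = ∏ j, Real.sqrt (∑ i, A i j ^ 2) := by simp_rw [h2]

/-- A matrix with `|det A| = 1` whose columns all have ℓα quasi-norm 1 for some `0 < α < 2`
is a signed permutation matrix: each column has exactly one nonzero entry, equal to `±1`. -/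
theorem signed_perm_of_det_one_columns_alpha_norm_one (D : ℕ) (A : Matrix (Fin D) (Fin D) ℝ)
    (α : ℝ) (hα0 : 0 < α) (hα2 : α < 2)
    (hdet : |A.det| = 1)
    (hcol : ∀ j, (∑ i, |A i j| ^ α) ^ (1 / α) = 1) :
    ∀ j, ∃ i, (A i j = 1 ∨ A i j = -1) ∧ ∀ i', i' ≠ i → A i' j = 0 := by
  -- the α-sums equal 1
  have hsum : ∀ j, (∑ i, |A i j| ^ α) = 1 := by
    intro j
    have h0 : (0:ℝ) ≤ ∑ i, |A i j| ^ α :=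
      Finset.sum_nonneg fun i _ => Real.rpow_nonneg (abs_nonneg _) _
    have := congrArg (fun x : ℝ => x ^ α) (hcol j)
    simpa [← Real.rpow_natCast, ← Real.rpow_mul h0,
      one_div, inv_mul_cancel₀ (ne_of_gt hα0)] using this
  -- every entry has absolute value at most 1
  have habs_le : ∀ i j, |A i j| ≤ 1 := by
    intro i j
    have hle : |A i j| ^ α ≤ 1 := by
      rw [← hsum j]
      exact Finset.single_le_sum (f := fun k => |A k j| ^ α)
        (fun k _ => Real.rpow_nonneg (abs_nonneg _) _) (Finset.mem_univ i)
    by_contra h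
    push_neg at h
    have := Real.one_lt_rpow_iff_of_pos (lt_trans one_pos h) (y := α)
    have h1 : 1 < |A i j| ^ α := this.mpr (Or.inl ⟨h, hα0⟩)
    linarith
  -- squares bounded by α-powers
  have hsq_le : ∀ i j, A i j ^ 2 ≤ |A i j| ^ α := by
    intro i j
    rcases eq_or_lt_of_le (abs_nonneg (A i j)) with h0 | h0
    · rw [← sq_abs, ← h0]
      simp [Real.zero_rpow (ne_of_gt hα0)]
    · calc A i j ^ 2 = |A i j| ^ (2:ℝ) := by
            rw [show (2:ℝ) = ((2:ℕ):ℝ) by norm_num, Real.rpow_natCast, sq_abs]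
        _ ≤ |A i j| ^ α :=
            Real.rpow_le_rpow_of_exponent_ge h0 (habs_le i j) (le_of_lt hα2)
  -- column ℓ2 sums are at most 1
  have hs2_le : ∀ j, (∑ i, A i j ^ 2) ≤ 1 := by
    intro j
    rw [← hsum j]
    exact Finset.sum_le_sum fun i _ => hsq_le i j
  have hnorm_le : ∀ j, Real.sqrt (∑ i, A i j ^ 2) ≤ 1 := by
    intro j
    rw [show (1:ℝ) = Real.sqrt 1 by simp]
    exact Real.sqrt_le_sqrt (hs2_le j)
  -- Hadamard forces each column ℓ2 norm to be 1
  have hprod : (∏ j, Real.sqrt (∑ i, A i j ^ 2)) = 1 := by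
    have h1 : (1:ℝ) ≤ ∏ j, Real.sqrt (∑ i, A i j ^ 2) := by
      rw [← hdet]; exact hadamard_abs_det_le D A
    have h2 : (∏ j, Real.sqrt (∑ i, A i j ^ 2)) ≤ 1 :=
      Finset.prod_le_one (fun j _ => Real.sqrt_nonneg _) (fun j _ => hnorm_le j)
    linarith
  have hs2 : ∀ j, (∑ i, A i j ^ 2) = 1 := by
    intro j
    have hge : (1:ℝ) ≤ Real.sqrt (∑ i, A i j ^ 2) := by
      have := Finset.mul_prod_erase Finset.univ
        (fun j => Real.sqrt (∑ i, A i j ^ 2)) (Finset.mem_univ j)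
      have herase : (∏ k ∈ Finset.univ.erase j, Real.sqrt (∑ i, A i k ^ 2)) ≤ 1 :=
        Finset.prod_le_one (fun k _ => Real.sqrt_nonneg _) (fun k _ => hnorm_le k)
      nlinarith [Real.sqrt_nonneg (∑ i, A i j ^ 2), hprod]
    have heq : Real.sqrt (∑ i, A i j ^ 2) = 1 := le_antisymm (hnorm_le j) hge
    have := congrArg (fun x => x ^ 2) heq
    simpa [Real.sq_sqrt (Finset.sum_nonneg fun i _ => sq_nonneg (A i j))] using this
  -- each entry is 0 or ±1
  have hentry : ∀ i j, A i j = 0 ∨ |A i j| = 1 := by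
    intro i j
    have hzero : (∑ i, (|A i j| ^ α - A i j ^ 2)) = 0 := by
      rw [Finset.sum_sub_distrib, hsum j, hs2 j]; ring
    have hterm : |A i j| ^ α - A i j ^ 2 = 0 := by
      have := (Finset.sum_eq_zero_iff_of_nonneg
        (fun i _ => sub_nonneg.mpr (hsq_le i j))).mp hzero i (Finset.mem_univ i)
      exact this
    have heq : |A i j| ^ α = A i j ^ 2 := by linarith
    rcases eq_or_lt_of_le (abs_nonneg (A i j)) with h0 | h0
    · left; exact abs_eq_zero.mp h0.symm
    · rcases eq_or_lt_of_le (habs_le i j) with h1 | h1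
      · right; exact h1
      · exfalso
        have : |A i j| ^ (2:ℝ) < |A i j| ^ α :=
          Real.rpow_lt_rpow_of_exponent_gt h0 h1 hα2
        have h2 : |A i j| ^ (2:ℝ) = A i j ^ 2 := by
          rw [show (2:ℝ) = ((2:ℕ):ℝ) by norm_num, Real.rpow_natCast, sq_abs]
        rw [h2, heq] at this
        exact lt_irrefl _ this
  -- conclude
  intro j
  -- there is a nonzero entry
  have hex : ∃ i, A i j ≠ 0 := by
    by_contra h
    push_neg at h
    have : (∑ i, |A i j| ^ α) = 0 := by
      refine Finset.sum_eq_zero fun i _ => ?_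
      rw [h i, abs_zero, Real.zero_rpow (ne_of_gt hα0)]
    rw [hsum j] at this
    norm_num at this
  obtain ⟨i, hi⟩ := hex
  have habs1 : |A i j| = 1 := (hentry i j).resolve_left hi
  refine ⟨i, ?_, ?_⟩
  · rcases abs_eq (by norm_num : (0:ℝ) ≤ 1) |>.mp habs1 with h | h
    · exact Or.inl h
    · exact Or.inr h
  · intro i' hne
    by_contra h
    have habs1' : |A i' j| = 1 := (hentry i' j).resolve_left h
    have hpair : ({i', i} : Finset (Fin D)).sum (fun k => |A k j| ^ α) = 2 := by
      rw [Finset.sum_pair hne, habs1, habs1', Real.one_rpow]; norm_num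
    have hle : ({i', i} : Finset (Fin D)).sum (fun k => |A k j| ^ α)
        ≤ ∑ k, |A k j| ^ α :=
      Finset.sum_le_sum_of_subset_of_nonneg (Finset.subset_univ _)
        (fun k _ _ => Real.rpow_nonneg (abs_nonneg _) _)
    rw [hpair, hsum j] at hle
    norm_num at hle
end

section
/- Let h : R^D → R^D be an affine bijection such that for all x, y ∈ R^D, ∑ᵢ |h(x)ᵢ - h(y)ᵢ|^α = ∑ᵢ |xᵢ - yᵢ|^α for some fixed 0 < α < 2, and such that ‖h(x)‖₂ = ‖x‖₂ for all x. Then h is linear and is given by a signed permutation matrix. -/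
open Real Finset

/-- `M` is a signed permutation matrix. -/
def IsSignedPerm {D : ℕ} (M : Matrix (Fin D) (Fin D) ℝ) : Prop :=
  ∃ σ : Equiv.Perm (Fin D), ∃ s : Fin D → ℝ, (∀ j, s j = 1 ∨ s j = -1) ∧
    ∀ i j, M i j = if i = σ j then s j else 0

lemma aux_le (α : ℝ) (hα0 : 0 < α) (hα2 : α < 2) (t : ℝ) (ht : |t| ≤ 1) :
    t ^ 2 ≤ |t| ^ α := by
  rcases eq_or_ne t 0 with rfl | h
  · simp [Real.zero_rpow hα0.ne']
  · have h0 : 0 < |t| := abs_pos.mpr h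
    have h2 : |t| ^ (2:ℝ) ≤ |t| ^ α :=
      Real.rpow_le_rpow_of_exponent_ge h0 ht hα2.le
    calc t ^ 2 = |t| ^ 2 := (sq_abs t).symm
    _ = |t| ^ ((2:ℕ):ℝ) := (Real.rpow_natCast _ 2).symm
    _ ≤ |t| ^ α := by exact_mod_cast h2

lemma aux_tri (α : ℝ) (hα0 : 0 < α) (hα2 : α < 2) (t : ℝ) (ht : |t| ≤ 1)
    (heq : |t| ^ α = t ^ 2) : t = 0 ∨ t = 1 ∨ t = -1 := by
  rcases eq_or_ne t 0 with rfl | h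
  · exact Or.inl rfl
  · right
    have h0 : 0 < |t| := abs_pos.mpr h
    have habs : |t| = 1 := by
      by_contra hne
      have h1 : |t| < 1 := lt_of_le_of_ne ht hne
      have hlt : |t| ^ (2:ℝ) < |t| ^ α := Real.rpow_lt_rpow_of_exponent_gt h0 h1 hα2
      have h2 : |t| ^ ((2:ℕ):ℝ) = t ^ 2 := by rw [Real.rpow_natCast, sq_abs]
      rw [show ((2:ℕ):ℝ) = (2:ℝ) by norm_num] at h2
      rw [h2, heq] at hlt
      exact lt_irrefl _ hlt
    exact abs_eq (by norm_num : (0:ℝ) ≤ 1) |>.mp habs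

/-- An affine bijection of `ℝ^D` preserving the `α`-th powers of ℓα distances (`0 < α < 2`)
and Euclidean norms is linear and given by a signed permutation matrix. -/
theorem affine_isometry_is_signed_perm (D : ℕ) (h : (Fin D → ℝ) → (Fin D → ℝ))
    (M : Matrix (Fin D) (Fin D) ℝ) (b : Fin D → ℝ)
    (haff : ∀ x, h x = M.mulVec x + b)
    (hbij : Function.Bijective h)
    (α : ℝ) (hα0 : 0 < α) (hα2 : α < 2)
    (hdist : ∀ x y, ∑ i, |h x i - h y i| ^ α = ∑ i, |x i - y i| ^ α)
    (hnorm : ∀ x, Real.sqrt (∑ i, (h x i) ^ 2) = Real.sqrt (∑ i, (x i) ^ 2)) :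
    b = 0 ∧ IsSignedPerm M := by
  classical
  have hb : b = 0 := by
    have h0 := hnorm 0
    rw [haff] at h0
    simp only [Matrix.mulVec_zero, zero_add, Pi.zero_apply] at h0
    have hz : ∑ i, b i ^ 2 = 0 := by
      have hnn : 0 ≤ ∑ i, b i ^ 2 := Finset.sum_nonneg fun i _ => sq_nonneg _
      have h0' : Real.sqrt (∑ i, b i ^ 2) = Real.sqrt 0 := by simpa using h0
      exact (Real.sqrt_inj hnn le_rfl).mp h0'
    funext i
    have := (Finset.sum_eq_zero_iff_of_nonneg (fun i _ => sq_nonneg (b i))).mp hz i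
      (Finset.mem_univ i)
    exact pow_eq_zero_iff (two_ne_zero) |>.mp this
  subst hb
  refine ⟨rfl, ?_⟩
  have hlin : ∀ x, h x = M.mulVec x := by intro x; rw [haff]; simp
  have hA : ∀ v, ∑ i, |M.mulVec v i| ^ α = ∑ i, |v i| ^ α := by
    intro v
    have := hdist v 0
    simpa [hlin, Matrix.mulVec_zero] using this
  have hB : ∀ v, ∑ i, (M.mulVec v i) ^ 2 = ∑ i, v i ^ 2 := by
    intro v
    have hv := hnorm v
    rw [hlin] at hv
    exact (Real.sqrt_inj (Finset.sum_nonneg fun i _ => sq_nonneg _)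
      (Finset.sum_nonneg fun i _ => sq_nonneg _)).mp hv
  have hms : ∀ j, M.mulVec (Pi.single j 1) = fun i => M i j := by
    intro j; rw [Matrix.mulVec_single]; simp; rfl
  have hsingleα : ∀ j : Fin D, ∑ i, |(Pi.single j 1 : Fin D → ℝ) i| ^ α = 1 := by
    intro j
    rw [Finset.sum_eq_single j]
    · simp
    · intro i _ hij
      simp [Pi.single_apply, hij, Real.zero_rpow hα0.ne']
    · simp
  have hsingle2 : ∀ j : Fin D, ∑ i, ((Pi.single j 1 : Fin D → ℝ) i) ^ 2 = 1 := by
    intro j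
    rw [Finset.sum_eq_single j]
    · simp
    · intro i _ hij; simp [Pi.single_apply, hij]
    · simp
  have hcolα : ∀ j, ∑ i, |M i j| ^ α = 1 := by
    intro j
    have := hA (Pi.single j 1)
    rw [hms j, hsingleα j] at this
    exact this
  have hcol2 : ∀ j, ∑ i, (M i j) ^ 2 = 1 := by
    intro j
    have := hB (Pi.single j 1)
    rw [hms j, hsingle2 j] at this
    exact this
  -- each entry is at most 1 in abs value
  have hentry : ∀ i j, |M i j| ≤ 1 := by
    intro i j
    have h1 : (M i j) ^ 2 ≤ ∑ k, (M k j) ^ 2 :=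
      Finset.single_le_sum (f := fun k => (M k j) ^ 2) (fun k _ => sq_nonneg _)
        (Finset.mem_univ i)
    rw [hcol2 j] at h1
    nlinarith [abs_nonneg (M i j), sq_abs (M i j)]
  have tri : ∀ i j, M i j = 0 ∨ M i j = 1 ∨ M i j = -1 := by
    intro i j
    have hle : ∀ k ∈ Finset.univ, (M k j) ^ 2 ≤ |M k j| ^ α :=
      fun k _ => aux_le α hα0 hα2 _ (hentry k j)
    have hsumeq : ∑ k, (M k j) ^ 2 = ∑ k, |M k j| ^ α := by
      rw [hcol2 j, hcolα j]
    have heq := (Finset.sum_eq_sum_iff_of_le hle).mp hsumeq i (Finset.mem_univ i)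
    exact aux_tri α hα0 hα2 _ (hentry i j) heq.symm
  -- exactly one nonzero per column
  have hcolone : ∀ j, ∃! i, M i j ≠ 0 := by
    intro j
    have hsq : ∀ i, (M i j) ^ 2 = if M i j ≠ 0 then 1 else 0 := by
      intro i
      rcases tri i j with h' | h' | h' <;> simp [h'] <;> norm_num
    have hsum' : ∑ i, (M i j) ^ 2
        = ((Finset.univ.filter fun i => M i j ≠ 0).card : ℝ) := by
      rw [← Finset.sum_boole]
      exact Finset.sum_congr rfl fun i _ => hsq i
    have hcard : ((Finset.univ.filter fun i => M i j ≠ 0).card : ℝ) = 1 := by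
      rw [← hsum', hcol2 j]
    have hcard' : (Finset.univ.filter fun i => M i j ≠ 0).card = 1 := by
      exact_mod_cast hcard
    obtain ⟨a, ha⟩ := Finset.card_eq_one.mp hcard'
    refine ⟨a, ?_, ?_⟩
    · have : a ∈ Finset.univ.filter fun i => M i j ≠ 0 := ha ▸ Finset.mem_singleton_self a
      exact (Finset.mem_filter.mp this).2
    · intro i hi
      have : i ∈ Finset.univ.filter fun i => M i j ≠ 0 :=
        Finset.mem_filter.mpr ⟨Finset.mem_univ i, hi⟩
      rw [ha, Finset.mem_singleton] at this
      exact this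
  -- the position function
  set f : Fin D → Fin D := fun j => (hcolone j).choose with hf
  have hfspec : ∀ j, M (f j) j ≠ 0 := fun j => (hcolone j).choose_spec.1
  have hfuniq : ∀ j i, M i j ≠ 0 → i = f j := fun j i hi => (hcolone j).choose_spec.2 i hi
  have hMinj : Function.Injective M.mulVec := by
    intro u v huv
    have : h u = h v := by rw [hlin, hlin, huv]
    exact hbij.1 this
  have hfinj : Function.Injective f := by
    intro j k hjk
    by_contra hne
    -- consider v = M (f k) k • e_j - M (f j) j • e_k
    set v : Fin D → ℝ := fun i =>
      M (f k) k * (Pi.single j 1 : Fin D → ℝ) i - M (f j) j * (Pi.single k 1 : Fin D → ℝ) i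
      with hv
    have hmv : M.mulVec v = 0 := by
      funext i
      simp only [hv, Matrix.mulVec, dotProduct, Pi.zero_apply]
      have hsum : ∀ l : Fin D, ∑ x, M i x * (Pi.single l 1 : Fin D → ℝ) x = M i l := by
        intro l
        rw [Finset.sum_eq_single l]
        · simp
        · intro x _ hx; simp [Pi.single_apply, hx]
        · simp
      have hkey : ∑ x, M i x * (M (f k) k * (Pi.single j 1 : Fin D → ℝ) x
            - M (f j) j * (Pi.single k 1 : Fin D → ℝ) x)
          = M (f k) k * M i j - M (f j) j * M i k := by
        calc ∑ x, M i x * (M (f k) k * (Pi.single j 1 : Fin D → ℝ) x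
              - M (f j) j * (Pi.single k 1 : Fin D → ℝ) x)
            = ∑ x, (M (f k) k * (M i x * (Pi.single j 1 : Fin D → ℝ) x)
              - M (f j) j * (M i x * (Pi.single k 1 : Fin D → ℝ) x)) := by
              exact Finset.sum_congr rfl fun x _ => by ring
          _ = M (f k) k * (∑ x, M i x * (Pi.single j 1 : Fin D → ℝ) x)
              - M (f j) j * (∑ x, M i x * (Pi.single k 1 : Fin D → ℝ) x) := by
              rw [Finset.sum_sub_distrib, Finset.mul_sum, Finset.mul_sum]
          _ = M (f k) k * M i j - M (f j) j * M i k := by rw [hsum j, hsum k]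
      rw [hkey]
      rcases eq_or_ne i (f j) with rfl | hi
      · rw [hjk]; ring
      · have h1 : M i j = 0 := by
          by_contra hc; exact hi (hfuniq j i hc)
        have h2 : M i k = 0 := by
          by_contra hc; exact hi (by rw [hfuniq k i hc, ← hjk])
        simp [h1, h2]
    have hv0 : v = 0 := by
      apply hMinj
      rw [hmv, Matrix.mulVec_zero]
    have hvj : v j = 0 := by rw [hv0]; rfl
    have : M (f k) k = 0 := by
      simpa [hv, Pi.single_apply, hne] using hvj
    exact hfspec k this
  have hfbij : Function.Bijective f := Finite.injective_iff_bijective.mp hfinj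
  refine ⟨Equiv.ofBijective f hfbij, fun j => M (f j) j, ?_, ?_⟩
  · intro j
    rcases tri (f j) j with h0 | h1 | h1
    · exact absurd h0 (hfspec j)
    · exact Or.inl h1
    · exact Or.inr h1
  · intro i j
    rcases eq_or_ne i (f j) with rfl | hi
    · simp [Equiv.ofBijective]
    · rw [if_neg (by simpa [Equiv.ofBijective] using hi)]
      by_contra hc
      exact hi (hfuniq j i hc)
end

section
/- For the generalized Laplace distribution with density p(z) ∝ exp(−λ|z|^α), the n-th absolute moment is E[|Z|^n] = λ^{−n/α}·Γ((n+1)/α)/Γ(1/α). In particular its excess kurtosis Γ(5/α)Γ(1/α)/Γ(3/α)² − 3 is strictly positive for α < 2, zero for α = 2, and strictly negative for α > 2. -/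
open Real MeasureTheory

section GLaplaceAux

open Filter Topology

/-- Auxiliary factor `(3t+x)²/((5t+x)(t+x))` in the Euler-product form of
`Γ(5t)Γ(t)/Γ(3t)²`. -/
noncomputable def glf (t x : ℝ) : ℝ := (3*t+x)^2 / ((5*t+x)*(t+x))

/-- Partial products of the factors `glf`. -/
noncomputable def glP (t : ℝ) (n : ℕ) : ℝ := ∏ j ∈ Finset.range (n+1), glf t j

lemma glf_pos {t x : ℝ} (ht : 0 < t) (hx : 0 ≤ x) : 0 < glf t x := by
  unfold glf; positivity

lemma glf_mono {t₁ t₂ x : ℝ} (h1 : 0 < t₁) (h : t₁ < t₂) (hx : 0 < x) :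
    glf t₁ x < glf t₂ x := by
  unfold glf
  have h2 : 0 < t₂ := h1.trans h
  rw [div_lt_div_iff₀ (by nlinarith) (by nlinarith)]
  nlinarith [mul_pos (mul_pos hx hx) (mul_pos (add_pos h1 h2) (sub_pos.mpr h)),
    mul_pos (mul_pos (mul_pos h1 h2) hx) (sub_pos.mpr h)]

lemma glf_zero {t : ℝ} (ht : 0 < t) : glf t 0 = 9/5 := by
  unfold glf; field_simp; ring

lemma glP_le {t₁ t₂ : ℝ} (h1 : 0 < t₁) (h : t₁ < t₂) {n : ℕ} (hn : 1 ≤ n) :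
    (glf t₂ 1 / glf t₁ 1) * glP t₁ n ≤ glP t₂ n := by
  induction n with
  | zero => omega
  | succ m ih =>
    rcases Nat.eq_or_lt_of_le hn with h0 | hm
    · have hm0 : m = 0 := by omega
      subst hm0
      unfold glP
      simp [Finset.prod_range_succ, glf_zero h1, glf_zero (h1.trans h)]
      have hne := (glf_pos h1 (by norm_num : (0:ℝ) ≤ 1)).ne'
      apply le_of_eq
      field_simp
    · have hm1 : 1 ≤ m := by omega
      have step1 : glf t₁ (m+1 : ℕ) ≤ glf t₂ (m+1 : ℕ) :=
        (glf_mono h1 h (by positivity)).le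
      have hp1 : 0 < glP t₁ m := Finset.prod_pos fun j _ => glf_pos h1 (by positivity)
      have hc : 0 < glf t₂ 1 / glf t₁ 1 :=
        div_pos (glf_pos (h1.trans h) one_pos.le) (glf_pos h1 one_pos.le)
      have hf1 : 0 < glf t₁ (m+1 : ℕ) := glf_pos h1 (by positivity)
      have e1 : glP t₁ (m+1) = glP t₁ m * glf t₁ (m+1 : ℕ) := Finset.prod_range_succ _ _
      have e2 : glP t₂ (m+1) = glP t₂ m * glf t₂ (m+1 : ℕ) := Finset.prod_range_succ _ _
      rw [e1, e2, ← mul_assoc]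
      calc (glf t₂ 1 / glf t₁ 1) * glP t₁ m * glf t₁ (m+1 : ℕ)
          ≤ glP t₂ m * glf t₂ (m+1 : ℕ) := by
            apply mul_le_mul (ih hm1) step1 hf1.le
            exact (Finset.prod_pos fun j _ => glf_pos (h1.trans h) (by positivity)).le

lemma glP_eq {t : ℝ} (ht : 0 < t) {n : ℕ} (hn : 1 ≤ n) :
    Real.GammaSeq (5*t) n * Real.GammaSeq t n / (Real.GammaSeq (3*t) n)^2 = glP t n := by
  have hn0 : (0:ℝ) < n := by exact_mod_cast hn
  have hA : 0 < ∏ j ∈ Finset.range (n+1), (5*t + j) :=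
    Finset.prod_pos fun j _ => by positivity
  have hB : 0 < ∏ j ∈ Finset.range (n+1), (t + j) :=
    Finset.prod_pos fun j _ => by positivity
  have hC : 0 < ∏ j ∈ Finset.range (n+1), (3*t + j) :=
    Finset.prod_pos fun j _ => by positivity
  have hfac : (0:ℝ) < (Nat.factorial n : ℝ) := by exact_mod_cast Nat.factorial_pos n
  have key : (n:ℝ)^(5*t) * (n:ℝ)^t = ((n:ℝ)^(3*t))^2 := by
    rw [sq, ← Real.rpow_add hn0, ← Real.rpow_add hn0]; ring_nf
  unfold Real.GammaSeq glP glf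
  rw [Finset.prod_div_distrib, Finset.prod_pow, Finset.prod_mul_distrib]
  rw [div_mul_div_comm, div_pow, div_div_div_eq]
  have hn5 : (0:ℝ) < (n:ℝ)^(3*t) := Real.rpow_pos_of_pos hn0 _
  have e : (n:ℝ) ^ (5*t) * (Nat.factorial n : ℝ) * ((n:ℝ) ^ t * (Nat.factorial n : ℝ)) =
      ((n:ℝ) ^ (3*t))^2 * (Nat.factorial n : ℝ)^2 := by rw [← key]; ring
  rw [e]
  field_simp

lemma K_mono {t₁ t₂ : ℝ} (h1 : 0 < t₁) (h : t₁ < t₂) :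
    Real.Gamma (5*t₁) * Real.Gamma t₁ / Real.Gamma (3*t₁)^2 <
      Real.Gamma (5*t₂) * Real.Gamma t₂ / Real.Gamma (3*t₂)^2 := by
  have h2 : 0 < t₂ := h1.trans h
  set c := glf t₂ 1 / glf t₁ 1 with hc
  have hc1 : 1 < c := (one_lt_div (glf_pos h1 one_pos.le)).mpr (glf_mono h1 h one_pos)
  have tends : ∀ t : ℝ, 0 < t → Tendsto (fun n => glP t n) atTop
      (𝓝 (Real.Gamma (5*t) * Real.Gamma t / Real.Gamma (3*t)^2)) := by
    intro t ht
    have h3 : (0:ℝ) < Real.Gamma (3*t)^2 :=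
      pow_pos (Real.Gamma_pos_of_pos (by linarith)) 2
    have := (((Real.GammaSeq_tendsto_Gamma (5*t)).mul
      (Real.GammaSeq_tendsto_Gamma t)).div
      ((Real.GammaSeq_tendsto_Gamma (3*t)).pow 2) h3.ne')
    refine this.congr' ?_
    filter_upwards [eventually_ge_atTop 1] with n hn
    exact glP_eq ht hn
  have K1pos : 0 < Real.Gamma (5*t₁) * Real.Gamma t₁ / Real.Gamma (3*t₁)^2 := by
    have := Real.Gamma_pos_of_pos (by linarith : (0:ℝ) < 5*t₁)
    have := Real.Gamma_pos_of_pos h1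
    have := Real.Gamma_pos_of_pos (by linarith : (0:ℝ) < 3*t₁)
    positivity
  have hle : c * (Real.Gamma (5*t₁) * Real.Gamma t₁ / Real.Gamma (3*t₁)^2) ≤
      Real.Gamma (5*t₂) * Real.Gamma t₂ / Real.Gamma (3*t₂)^2 := by
    refine le_of_tendsto_of_tendsto (tendsto_const_nhds.mul (tends t₁ h1)) (tends t₂ h2) ?_
    filter_upwards [eventually_ge_atTop 1] with n hn
    exact glP_le h1 h hn
  nlinarith

lemma K_at_half : Real.Gamma (5*(1/2:ℝ)) * Real.Gamma (1/2) / Real.Gamma (3*(1/2:ℝ))^2 = 3 := by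
  have h1 : Real.Gamma (1/2 : ℝ) = sqrt π := Real.Gamma_one_half_eq
  have h2 : Real.Gamma (3*(1/2) : ℝ) = (1/2) * sqrt π := by
    rw [show (3*(1/2):ℝ) = 1/2 + 1 by norm_num, Real.Gamma_add_one (by norm_num), h1]
  have h3 : Real.Gamma (5*(1/2) : ℝ) = (3/2) * ((1/2) * sqrt π) := by
    rw [show (5*(1/2):ℝ) = 3*(1/2) + 1 by norm_num, Real.Gamma_add_one (by norm_num), h2]
    ring
  rw [h1, h2, h3]
  have hs : sqrt π * sqrt π = π := Real.mul_self_sqrt pi_pos.le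
  have hπ : (0:ℝ) < π := pi_pos
  field_simp

end GLaplaceAux

/-- Absolute moments of the generalized Laplace distribution:
`E[|Z|^n] = λ^{−n/α}·Γ((n+1)/α)/Γ(1/α)`, and its excess kurtosis
`Γ(5/α)Γ(1/α)/Γ(3/α)² − 3` is positive for `α < 2`, zero for `α = 2`,
negative for `α > 2`. -/
theorem generalized_laplace_moments_and_kurtosis (α lam : ℝ) (hα : 0 < α) (hlam : 0 < lam) :
    (∀ n : ℕ, ∫ z : ℝ, |z| ^ (n : ℝ) *
        ((α * lam ^ ((1 : ℝ) / α) / (2 * Real.Gamma (1 / α))) * Real.exp (-lam * |z| ^ α)) =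
      lam ^ (-(n : ℝ) / α) * Real.Gamma (((n : ℝ) + 1) / α) / Real.Gamma (1 / α)) ∧
    (α < 2 → 0 < Real.Gamma (5 / α) * Real.Gamma (1 / α) / (Real.Gamma (3 / α)) ^ 2 - 3) ∧
    (α = 2 → Real.Gamma (5 / α) * Real.Gamma (1 / α) / (Real.Gamma (3 / α)) ^ 2 - 3 = 0) ∧
    (2 < α → Real.Gamma (5 / α) * Real.Gamma (1 / α) / (Real.Gamma (3 / α)) ^ 2 - 3 < 0) := by
  refine ⟨fun n => ?_, fun hlt => ?_, fun heq => ?_, fun hgt => ?_⟩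
  · set c : ℝ := α * lam ^ ((1 : ℝ) / α) / (2 * Real.Gamma (1 / α)) with hc
    have h1 : ∫ z : ℝ, |z| ^ (n : ℝ) * (c * Real.exp (-lam * |z| ^ α)) =
        2 * ∫ x in Set.Ioi (0:ℝ), x ^ (n : ℝ) * (c * Real.exp (-lam * x ^ α)) :=
      integral_comp_abs (f := fun x => x ^ (n : ℝ) * (c * Real.exp (-lam * x ^ α)))
    rw [h1]
    simp_rw [mul_left_comm _ c, integral_const_mul]
    rw [integral_rpow_mul_exp_neg_mul_rpow hα
      ((by norm_num : (-1:ℝ) < 0).trans_le (Nat.cast_nonneg n)) hlam]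
    have hG : Real.Gamma (1/α) > 0 := Real.Gamma_pos_of_pos (by positivity)
    rw [hc]
    field_simp
    ring_nf
    rw [← Real.rpow_add hlam]
    ring_nf
  · have h12 : (1:ℝ)/2 < 1/α := by
      rw [div_lt_div_iff₀ (by norm_num) hα]; linarith
    have h := K_mono (by norm_num : (0:ℝ) < 1/2) h12
    rw [K_at_half, show 5*(1/α) = 5/α by ring, show 3*(1/α) = 3/α by ring,
      show (1:ℝ)/α = 1/α by ring] at h
    linarith
  · subst heq
    have h := K_at_half
    rw [show 5*(1/2:ℝ) = 5/2 by norm_num, show 3*(1/2:ℝ) = 3/2 by norm_num] at h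
    norm_num
    linarith
  · have h12 : (1:ℝ)/α < 1/2 := by
      rw [div_lt_div_iff₀ hα (by norm_num)]; linarith
    have h := K_mono (by positivity : (0:ℝ) < 1/α) h12
    rw [K_at_half, show 5*(1/α) = 5/α by ring, show 3*(1/α) = 3/α by ring] at h
    linarith
end

section
/- For a random variable X with density p(x) ∝ exp(−λ|x|^α) with 0 < α < 2 and λ > 0, the excess kurtosis E[X⁴]/(E[X²])² − 3 = Γ(5/α)·Γ(1/α)/Γ(3/α)² − 3 is a strictly decreasing function of α on (0, 2), tending to +∞ as α → 0⁺ and to 0 as α → 2⁻. -/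
open Real Filter Finset Topology

namespace GLKurt

/-- the `j`-th factor in the Euler-product expression for the kurtosis ratio -/
noncomputable def F (t : ℝ) (j : ℕ) : ℝ := (3*t + j)^2 / ((5*t + j) * (t + j))

/-- partial products -/
noncomputable def P (t : ℝ) (n : ℕ) : ℝ := ∏ j ∈ Finset.range (n+1), F t j

/-- the kurtosis ratio as function of `t = 1/α` -/
noncomputable def g (t : ℝ) : ℝ := Real.Gamma (5*t) * Real.Gamma t / (Real.Gamma (3*t))^2

lemma jc (j : ℕ) : (0:ℝ) ≤ (j:ℝ) := j.cast_nonneg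

lemma F_pos {t : ℝ} (ht : 0 < t) (j : ℕ) : 0 < F t j := by
  have := jc j
  apply div_pos (by positivity) (mul_pos (by linarith) (by linarith))

lemma F_ge_one {t : ℝ} (ht : 0 < t) (j : ℕ) : 1 ≤ F t j := by
  have := jc j
  rw [F, le_div_iff₀ (mul_pos (by linarith) (by linarith))]
  nlinarith [sq_nonneg t]

lemma F_mono {s t : ℝ} (hs : 0 < s) (hst : s ≤ t) (j : ℕ) : F s j ≤ F t j := by
  have hj := jc j
  have ht : 0 < t := lt_of_lt_of_le hs hst
  rw [F, F, div_le_div_iff₀ (mul_pos (by linarith) (by linarith))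
    (mul_pos (by linarith) (by linarith))]
  nlinarith [mul_nonneg (mul_nonneg (mul_nonneg hj hs.le) ht.le) (sub_nonneg.2 hst),
    mul_nonneg (mul_nonneg (mul_nonneg hj hj) (sub_nonneg.2 hst)) (by linarith : (0:ℝ) ≤ s + t)]

lemma F_one_strict {s t : ℝ} (hs : 0 < s) (hst : s < t) : F s 1 < F t 1 := by
  have ht : 0 < t := hs.trans hst
  rw [F, F, div_lt_div_iff₀ (mul_pos (by linarith) (by linarith))
    (mul_pos (by linarith) (by linarith))]
  push_cast
  nlinarith [mul_pos (mul_pos hs ht) (sub_pos.2 hst), sub_pos.2 hst]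

lemma P_pos {t : ℝ} (ht : 0 < t) (n : ℕ) : 0 < P t n :=
  Finset.prod_pos fun j _ => F_pos ht j

lemma P_mono_n {t : ℝ} (ht : 0 < t) : Monotone (P t) := by
  apply monotone_nat_of_le_succ
  intro n
  have h : P t (n+1) = P t n * F t (n+1) := by
    rw [P, P]; exact Finset.prod_range_succ _ _
  rw [h]
  exact le_mul_of_one_le_right (P_pos ht n).le (F_ge_one ht (n+1))

lemma prod_pos_aux {x : ℝ} (hx : 0 < x) (n : ℕ) :
    0 < ∏ j ∈ Finset.range (n+1), (x + (j:ℝ)) :=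
  Finset.prod_pos fun j _ => by have := jc j; linarith

lemma P_eq {t : ℝ} (ht : 0 < t) {n : ℕ} (hn : 1 ≤ n) :
    Real.GammaSeq (5*t) n * Real.GammaSeq t n / (Real.GammaSeq (3*t) n)^2 = P t n := by
  have hn0 : (0:ℝ) < n := by exact_mod_cast hn
  have hfact : (Nat.factorial n : ℝ) ≠ 0 := by positivity
  have hA := prod_pos_aux (by linarith : (0:ℝ) < 5*t) n
  have hB := prod_pos_aux ht n
  have hC := prod_pos_aux (by linarith : (0:ℝ) < 3*t) n
  have hpow : (n:ℝ)^(5*t) * (n:ℝ)^t = ((n:ℝ)^(3*t))^2 := by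
    rw [sq, ← Real.rpow_add hn0, ← Real.rpow_add hn0]
    ring_nf
  rw [Real.GammaSeq, Real.GammaSeq, Real.GammaSeq, P]
  simp only [F]
  rw [Finset.prod_div_distrib, Finset.prod_mul_distrib, Finset.prod_pow]
  field_simp
  rw [show t * 3 = 3 * t by ring]
  linear_combination hpow

lemma P_tendsto {t : ℝ} (ht : 0 < t) : Tendsto (P t) atTop (𝓝 (g t)) := by
  have hG3 : Real.Gamma (3*t) ≠ 0 := (Real.Gamma_pos_of_pos (by linarith)).ne'
  have key : Tendsto (fun n => Real.GammaSeq (5*t) n * Real.GammaSeq t n /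
      (Real.GammaSeq (3*t) n)^2) atTop (𝓝 (g t)) :=
    ((Real.GammaSeq_tendsto_Gamma (5*t)).mul (Real.GammaSeq_tendsto_Gamma t)).div
      ((Real.GammaSeq_tendsto_Gamma (3*t)).pow 2) (pow_ne_zero _ hG3)
  refine key.congr' ?_
  filter_upwards [eventually_ge_atTop 1] with n hn
  exact P_eq ht hn

lemma g_pos {t : ℝ} (ht : 0 < t) : 0 < g t := by
  have h5 := Real.Gamma_pos_of_pos (by linarith : (0:ℝ) < 5*t)
  have h1 := Real.Gamma_pos_of_pos ht
  have h3 := Real.Gamma_pos_of_pos (by linarith : (0:ℝ) < 3*t)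
  exact div_pos (mul_pos h5 h1) (by positivity)

lemma g_ge_P {t : ℝ} (ht : 0 < t) (N : ℕ) : P t N ≤ g t := by
  refine ge_of_tendsto (P_tendsto ht) ?_
  filter_upwards [eventually_ge_atTop N] with n hn
  exact P_mono_n ht hn

lemma g_strictMono {s t : ℝ} (hs : 0 < s) (hst : s < t) : g s < g t := by
  have ht : 0 < t := hs.trans hst
  set c : ℝ := F t 1 / F s 1 with hc
  have hFs := F_pos hs 1
  have hc1 : 1 < c := (one_lt_div hFs).2 (F_one_strict hs hst)
  have key : ∀ n : ℕ, 1 ≤ n → c * P s n ≤ P t n := by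
    intro n hn
    have h1mem : 1 ∈ Finset.range (n+1) := Finset.mem_range.2 (by omega)
    have hPs : P s n = F s 1 * ∏ j ∈ (Finset.range (n+1)).erase 1, F s j :=
      (Finset.mul_prod_erase _ _ h1mem).symm
    have hPt : P t n = F t 1 * ∏ j ∈ (Finset.range (n+1)).erase 1, F t j :=
      (Finset.mul_prod_erase _ _ h1mem).symm
    have hQ : ∏ j ∈ (Finset.range (n+1)).erase 1, F s j ≤
        ∏ j ∈ (Finset.range (n+1)).erase 1, F t j :=
      Finset.prod_le_prod (fun j _ => (F_pos hs j).le) (fun j _ => F_mono hs hst.le j)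
    have hcP : c * P s n = F t 1 * ∏ j ∈ (Finset.range (n+1)).erase 1, F s j := by
      rw [hc, hPs]
      field_simp
    rw [hcP, hPt]
    exact mul_le_mul_of_nonneg_left hQ (F_pos ht 1).le
  have hlim : Tendsto (fun n => c * P s n) atTop (𝓝 (c * g s)) :=
    (P_tendsto hs).const_mul c
  have hle : c * g s ≤ g t := by
    refine le_of_tendsto_of_tendsto hlim (P_tendsto ht) ?_
    filter_upwards [eventually_ge_atTop 1] with n hn using key n hn
  calc g s < c * g s := by nlinarith [g_pos hs]
    _ ≤ g t := hle

lemma F_tendsto (j : ℕ) : Tendsto (fun t => F t j) atTop (𝓝 (9/5)) := by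
  have hj : Tendsto (fun t : ℝ => (j:ℝ)/t) atTop (𝓝 0) :=
    tendsto_const_nhds.div_atTop tendsto_id
  have h3 : Tendsto (fun t : ℝ => 3 + (j:ℝ)/t) atTop (𝓝 3) := by
    simpa using tendsto_const_nhds.add hj
  have h5 : Tendsto (fun t : ℝ => 5 + (j:ℝ)/t) atTop (𝓝 5) := by
    simpa using tendsto_const_nhds.add hj
  have h1 : Tendsto (fun t : ℝ => 1 + (j:ℝ)/t) atTop (𝓝 1) := by
    simpa using tendsto_const_nhds.add hj
  have key : Tendsto (fun t : ℝ => (3 + (j:ℝ)/t)^2 / ((5 + (j:ℝ)/t) * (1 + (j:ℝ)/t)))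
      atTop (𝓝 (9/5)) := by
    have := (h3.pow 2).div (h5.mul h1) (by norm_num)
    norm_num at this
    exact this
  refine key.congr' ?_
  filter_upwards [eventually_gt_atTop 0] with t htpos
  rw [F]
  field_simp

lemma g_atTop : Tendsto g atTop atTop := by
  rw [tendsto_atTop]
  intro M
  obtain ⟨N, hN⟩ := ((tendsto_pow_atTop_atTop_of_one_lt
    (show (1:ℝ) < 9/5 by norm_num)).eventually_ge_atTop (M+1)).exists
  have hlim : Tendsto (fun t => P t N) atTop (𝓝 ((9/5:ℝ)^(N+1))) := by
    have := tendsto_finset_prod (Finset.range (N+1))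
      (fun j _ => F_tendsto j)
    simpa [P, Finset.prod_const, Finset.card_range, div_pow] using this
  have hMlt : M < (9/5:ℝ)^(N+1) := by
    have : (9/5:ℝ)^N ≤ (9/5:ℝ)^(N+1) := by
      apply pow_le_pow_right₀ (by norm_num) (by omega)
    linarith
  filter_upwards [hlim.eventually_const_lt hMlt, eventually_gt_atTop 0] with t h1 h2
  exact le_trans h1.le (g_ge_P h2 N)

end GLKurt

open Real Filter

/-- The excess kurtosis `Γ(5/α)Γ(1/α)/Γ(3/α)² − 3` of the generalized Laplace distribution
is strictly decreasing in `α` on `(0, 2)`, tends to `+∞` as `α → 0⁺`, and tends to `0`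
as `α → 2⁻`. -/
theorem generalized_laplace_kurtosis_monotone :
    StrictAntiOn
      (fun α : ℝ => Real.Gamma (5 / α) * Real.Gamma (1 / α) / (Real.Gamma (3 / α)) ^ 2 - 3)
      (Set.Ioo 0 2) ∧
    Tendsto (fun α : ℝ => Real.Gamma (5 / α) * Real.Gamma (1 / α) / (Real.Gamma (3 / α)) ^ 2 - 3)
      (nhdsWithin 0 (Set.Ioi 0)) atTop ∧
    Tendsto (fun α : ℝ => Real.Gamma (5 / α) * Real.Gamma (1 / α) / (Real.Gamma (3 / α)) ^ 2 - 3)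
      (nhdsWithin 2 (Set.Iio 2)) (nhds 0) := by
  have hfe : ∀ α : ℝ, Real.Gamma (5 / α) * Real.Gamma (1 / α) / (Real.Gamma (3 / α)) ^ 2 - 3
      = GLKurt.g (1/α) - 3 := by
    intro α
    rw [GLKurt.g, mul_one_div, mul_one_div]
  refine ⟨?_, ?_, ?_⟩
  · intro a ha b hb hab
    simp only [hfe]
    have h1b : 0 < 1/b := by
      have := ha.1.trans hab; positivity
    have := GLKurt.g_strictMono h1b (one_div_lt_one_div_of_lt ha.1 hab)
    linarith
  · have h1 : Tendsto (fun α : ℝ => 1/α) (nhdsWithin (0:ℝ) (Set.Ioi 0)) atTop := by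
      simpa [one_div] using tendsto_inv_nhdsGT_zero (𝕜 := ℝ)
    have h2 : Tendsto (fun α : ℝ => GLKurt.g (1/α)) (nhdsWithin (0:ℝ) (Set.Ioi 0)) atTop :=
      GLKurt.g_atTop.comp h1
    have h3 := tendsto_atTop_add_const_right _ (-3 : ℝ) h2
    refine h3.congr fun α => ?_
    rw [hfe α]; ring
  · have hG : ∀ x : ℝ, 0 < x → ContinuousAt Real.Gamma x := by
      intro x hx
      refine (Real.differentiableAt_Gamma fun m => ?_).continuousAt
      have : (0:ℝ) ≤ (m:ℝ) := m.cast_nonneg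
      intro h; rw [h] at hx; linarith
    have cdiv : ∀ c : ℝ, ContinuousAt (fun α : ℝ => c/α) 2 :=
      fun c => continuousAt_const.div continuousAt_id (by norm_num)
    have c5 : ContinuousAt (fun α : ℝ => Real.Gamma (5/α)) 2 :=
      (hG (5/2) (by norm_num)).comp (cdiv 5)
    have c1 : ContinuousAt (fun α : ℝ => Real.Gamma (1/α)) 2 :=
      (hG (1/2) (by norm_num)).comp (cdiv 1)
    have c3 : ContinuousAt (fun α : ℝ => Real.Gamma (3/α)) 2 :=
      (hG (3/2) (by norm_num)).comp (cdiv 3)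
    have hne : (fun α : ℝ => (Real.Gamma (3/α))^2) 2 ≠ 0 := by
      simp only
      exact pow_ne_zero _ (Real.Gamma_pos_of_pos (by norm_num : (0:ℝ) < 3/2)).ne'
    have hcont : ContinuousAt
        (fun α : ℝ => Real.Gamma (5 / α) * Real.Gamma (1 / α) / (Real.Gamma (3 / α)) ^ 2 - 3)
        2 := ((c5.mul c1).div (c3.pow 2) hne).sub continuousAt_const
    have hs : Real.sqrt π ≠ 0 := (Real.sqrt_pos.2 Real.pi_pos).ne'
    have h12 : Real.Gamma (1/2) = Real.sqrt π := Real.Gamma_one_half_eq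
    have h32 : Real.Gamma (3/2) = (1/2) * Real.sqrt π := by
      rw [show (3/2:ℝ) = 1/2 + 1 by norm_num, Real.Gamma_add_one (by norm_num), h12]
    have h52 : Real.Gamma (5/2) = (3/2) * ((1/2) * Real.sqrt π) := by
      rw [show (5/2:ℝ) = 3/2 + 1 by norm_num, Real.Gamma_add_one (by norm_num), h32]
    have hval : Real.Gamma (5/(2:ℝ)) * Real.Gamma (1/(2:ℝ)) /
        (Real.Gamma (3/(2:ℝ))) ^ 2 - 3 = 0 := by
      norm_num [h12, h32, h52]
      field_simp
      nlinarith [Real.sq_sqrt Real.pi_pos.le]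
    have h := hcont.continuousWithinAt (s := Set.Iio 2)
    rw [ContinuousWithinAt] at h
    rw [hval] at h
    exact h
end
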